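/- Let X be uniformly distributed on {0,1}² and let F be a uniform balanced random predicate on {0,1}², independent of X. Then for every family {ρ_x}_{x∈{0,1}²} of density matrices on ℂ², d(F(X)|⟨ρ_X,F⟩) ≤ 1/(2√3). -/

import Mathlib

open Finset ComplexOrder

/-- The distance of a distribution `P` on a finite set `Z` from the uniform
distribution: `d(P) = (1/2) ∑_z |P z - 1/|Z||`. -/
noncomputable def distUnif {Z : Type*} [Fintype Z] (P : Z → ℝ) : ℝ :=
  (1 / 2) * ∑ z, |P z - 1 / (Fintype.card Z : ℝ)|

/-- For a joint distribution `P` on `W × Z` (given as `P : W → Z → ℝ`), the expected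
distance of `Z` from uniform given `W`: `d(Z|W) = ∑_w P_W(w) · d(P_{Z|W=w})`. -/
noncomputable def dCond {W Z : Type*} [Fintype W] [Fintype Z] (P : W → Z → ℝ) : ℝ :=
  ∑ w, (∑ z, P w z) * distUnif (fun z => P w z / ∑ z', P w z')

/-- A POVM on `ℂ^d` with an arbitrary finite outcome set: a family `{E_w}` of positive
semidefinite `d×d` complex matrices summing to the identity. -/
structure POVM (d : ℕ) where
  ι : Type
  [fin : Fintype ι]
  E : ι → Matrix (Fin d) (Fin d) ℂ
  psd : ∀ w, (E w).PosSemidef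
  sum_eq : ∑ w, E w = 1

attribute [instance] POVM.fin

/-- Given `X` with distribution `PX` on `𝒳`, a family `{ρ_x}` of density matrices on
`ℂ^d`, and a function `g : 𝒳 → 𝒵`, the distance of `g(X)` from uniform given `ρ_X`:
the supremum over all POVMs `{E_w}` (with arbitrary finite outcome sets) of
`d(g(X)|W)`, where `W` is the measurement outcome, with joint distribution
`P_{X W}(x,w) = PX x · tr(E_w ρ_x)`. -/
noncomputable def dQuant {d : ℕ} {𝒳 𝒵 : Type} [Fintype 𝒳] [Fintype 𝒵] [DecidableEq 𝒵]
    (PX : 𝒳 → ℝ) (ρ : 𝒳 → Matrix (Fin d) (Fin d) ℂ) (g : 𝒳 → 𝒵) : ℝ :=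
  sSup {r : ℝ | ∃ M : POVM d,
    r = dCond (fun (w : M.ι) (z : 𝒵) =>
      ∑ x ∈ univ.filter (fun x => g x = z), PX x * ((M.E w) * ρ x).trace.re)}

/-- The balanced predicates on `{0,1}²` (predicates taking each of the two values on
exactly half of the domain); `{0,1}` is identified with `Bool`. -/
def Bal : Finset ((Bool × Bool) → Bool) :=
  univ.filter (fun f =>
    (univ.filter (fun x => f x = false)).card = (univ.filter (fun x => f x = true)).card)

/-- The distribution of a uniform balanced random predicate on `{0,1}²`. -/
noncomputable def PF (f : (Bool × Bool) → Bool) : ℝ :=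
  if f ∈ Bal then (Bal.card : ℝ)⁻¹ else 0

section Helpers

open Matrix Complex

lemma diag_nonneg2 {n : Type*} [Fintype n] [DecidableEq n] {M : Matrix n n ℂ}
    (hM : M.PosSemidef) (i : n) : 0 ≤ M i i := by
  exact hM.diag_nonneg

lemma trace_mul_psd_nonneg {n : Type*} [Fintype n] [DecidableEq n] {E P : Matrix n n ℂ}
    (hE : E.PosSemidef) (hP : P.PosSemidef) : 0 ≤ (E * P).trace := by
  have hS : ∃ S : Matrix n n ℂ, P = Sᴴ * S := by
    open scoped MatrixOrder in
    obtain ⟨S, hS⟩ := CStarAlgebra.nonneg_iff_eq_star_mul_self.mp hP.nonneg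
    exact ⟨S, by rw [hS]; rfl⟩
  obtain ⟨S, rfl⟩ := hS
  rw [← mul_assoc, Matrix.trace_mul_comm, ← mul_assoc]
  exact Finset.sum_nonneg fun i _ => diag_nonneg2 (hE.mul_mul_conjTranspose_same S) i

lemma trace_mul_psd_re_nonneg {n : Type*} [Fintype n] [DecidableEq n] {E P : Matrix n n ℂ}
    (hE : E.PosSemidef) (hP : P.PosSemidef) : 0 ≤ (E * P).trace.re :=
  ((Complex.nonneg_iff).1 (trace_mul_psd_nonneg hE hP)).1

lemma psd_scalar {M : Matrix (Fin 2) (Fin 2) ℂ} (hM : M.PosSemidef) (z w : ℂ) :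
    0 ≤ ((starRingEnd ℂ) z * (M 0 0 * z + M 0 1 * w) +
      (starRingEnd ℂ) w * (M 1 0 * z + M 1 1 * w)).re := by
  have := hM.dotProduct_mulVec_nonneg ![z, w]
  rw [Complex.nonneg_iff] at this
  simpa [dotProduct, mulVec, Fin.sum_univ_two] using this.1

lemma rho_facts {M : Matrix (Fin 2) (Fin 2) ℂ} (hM : M.PosSemidef) (ht : M.trace = 1) :
    0 ≤ (M 0 0).re ∧ (M 0 0).re ≤ 1 ∧
      (M 0 1).re ^ 2 + (M 0 1).im ^ 2 ≤ (M 0 0).re * (1 - (M 0 0).re) := by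
  have h10 : M 1 0 = (starRingEnd ℂ) (M 0 1) := by
    have := hM.1.apply 1 0
    simpa [Matrix.star_apply] using this.symm
  have h00 : (M 0 0).im = 0 := by
    have := hM.1.apply 0 0
    have h2 := congrArg Complex.im this
    simp at h2
    linarith
  have h11im : (M 1 1).im = 0 := by
    have := hM.1.apply 1 1
    have h2 := congrArg Complex.im this
    simp at h2
    linarith
  have htr : (M 0 0).re + (M 1 1).re = 1 := by
    have := congrArg Complex.re ht
    simpa [Matrix.trace, Fin.sum_univ_two] using this
  set a := (M 0 0).re
  set d := (M 1 1).re
  set u := (M 0 1).re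
  set v := (M 0 1).im
  have ha : 0 ≤ a := by
    have := diag_nonneg2 hM 0
    rw [Complex.nonneg_iff] at this; exact this.1
  have hd : 0 ≤ d := by
    have := diag_nonneg2 hM 1
    rw [Complex.nonneg_iff] at this; exact this.1
  have hq : ∀ t : ℝ, 0 ≤ (a * (u^2+v^2)) * (t*t) + (-2*(u^2+v^2)) * t + d := by
    intro t
    have h := psd_scalar hM ((t : ℂ) * M 0 1) (-1)
    have heq : (((starRingEnd ℂ) ((t:ℂ) * M 0 1)) * (M 0 0 * ((t:ℂ) * M 0 1) + M 0 1 * (-1)) +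
      (starRingEnd ℂ) (-1) * (M 1 0 * ((t:ℂ) * M 0 1) + M 1 1 * (-1))).re
        = (a * (u^2+v^2)) * (t*t) + (-2*(u^2+v^2)) * t + d := by
      rw [h10]
      simp [Complex.ext_iff, Complex.mul_re, Complex.mul_im, Complex.add_re, h00, h11im]
      ring
    rwa [heq] at h
  have hdisc := discrim_le_zero hq
  rw [discrim] at hdisc
  have hm : 0 ≤ u^2+v^2 := by positivity
  refine ⟨ha, by linarith, ?_⟩
  have hd1 : d = 1 - a := by linarith
  rw [← hd1]
  nlinarith [hdisc, hm, mul_nonneg ha hd]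

lemma quad_nonneg (α u v L A B X Y : ℝ) (hA : 0 ≤ A) (hB : 0 ≤ B)
    (hXY : X^2 + Y^2 ≤ A*B) (hL2 : L^2 = α^2+u^2+v^2) (hL : 0 ≤ L) :
    0 ≤ (L+α)*A + (L-α)*B + 2*(u*X + v*Y) := by
  have h1 : (α*(A-B)+2*u*X+2*v*Y)^2 ≤ (L*(A+B))^2 := by
    nlinarith [sq_nonneg (2*α*X - u*(A-B)), sq_nonneg (2*α*Y - v*(A-B)),
      sq_nonneg (2*u*Y - 2*v*X), sq_nonneg (α*(A-B)), mul_nonneg hA hB,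
      sq_nonneg (A-B), sq_nonneg (A+B), sq_nonneg α, sq_nonneg u, sq_nonneg v]
  have h2 : 0 ≤ L*(A+B) := mul_nonneg hL (by linarith)
  nlinarith [h1, h2]

noncomputable def lam (B : Matrix (Fin 2) (Fin 2) ℂ) : ℝ :=
  Real.sqrt ((B 0 0).re^2 + (B 0 1).re^2 + (B 0 1).im^2)

lemma lam_nonneg (B : Matrix (Fin 2) (Fin 2) ℂ) : 0 ≤ lam B := Real.sqrt_nonneg _

lemma lam_sq (B : Matrix (Fin 2) (Fin 2) ℂ) :
    (lam B)^2 = (B 0 0).re^2 + (B 0 1).re^2 + (B 0 1).im^2 :=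
  Real.sq_sqrt (by positivity)

lemma lam_neg (B : Matrix (Fin 2) (Fin 2) ℂ) : lam (-B) = lam B := by
  unfold lam
  congr 1
  simp [Matrix.neg_apply]

lemma psd_shift {B : Matrix (Fin 2) (Fin 2) ℂ} (hB : B.IsHermitian) (htr : B.trace = 0) :
    (B + (lam B : ℂ) • 1).PosSemidef := by
  have h10 : B 1 0 = (starRingEnd ℂ) (B 0 1) := by
    have := hB.apply 1 0
    simpa [Matrix.star_apply] using this.symm
  have h00im : (B 0 0).im = 0 := by
    have := hB.apply 0 0
    have h2 := congrArg Complex.im this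
    simp at h2; linarith
  have h11 : B 1 1 = -(B 0 0) := by
    have : B 0 0 + B 1 1 = 0 := by
      simpa [Matrix.trace, Fin.sum_univ_two] using htr
    linear_combination this
  refine Matrix.PosSemidef.of_dotProduct_mulVec_nonneg ?_ ?_
  · apply hB.add
    show _ᴴ = _
    rw [Matrix.conjTranspose_smul, Matrix.conjTranspose_one]
    norm_num
  · intro x
    have hexp : star x ⬝ᵥ ((B + (lam B : ℂ) • 1) *ᵥ x) =
        (starRingEnd ℂ) (x 0) * ((B 0 0 + (lam B : ℂ)) * x 0 + B 0 1 * x 1) +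
        (starRingEnd ℂ) (x 1) * (B 1 0 * x 0 + (B 1 1 + (lam B : ℂ)) * x 1) := by
      simp [dotProduct, mulVec, Fin.sum_univ_two, Matrix.add_apply, Matrix.smul_apply,
        Matrix.one_apply]
    rw [hexp, h10, h11]
    set α := (B 0 0).re
    set u := (B 0 1).re
    set v := (B 0 1).im
    set L := lam B
    have hL2 : L^2 = α^2 + u^2 + v^2 := lam_sq B
    have hL : 0 ≤ L := lam_nonneg B
    rw [Complex.nonneg_iff]
    have hre : ((starRingEnd ℂ) (x 0) * ((B 0 0 + (L : ℂ)) * x 0 + B 0 1 * x 1) +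
        (starRingEnd ℂ) (x 1) * ((starRingEnd ℂ) (B 0 1) * x 0 + (-(B 0 0) + (L : ℂ)) * x 1)).re
        = (L+α)*((x 0).re^2+(x 0).im^2) + (L-α)*((x 1).re^2+(x 1).im^2)
          + 2*(u*((x 0).re*(x 1).re + (x 0).im*(x 1).im)
             + (-v)*((x 0).re*(x 1).im - (x 0).im*(x 1).re)) := by
      simp [Complex.mul_re, Complex.add_re, Complex.add_im, Complex.mul_im, h00im]
      ring
    have him : ((starRingEnd ℂ) (x 0) * ((B 0 0 + (L : ℂ)) * x 0 + B 0 1 * x 1) +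
        (starRingEnd ℂ) (x 1) * ((starRingEnd ℂ) (B 0 1) * x 0 + (-(B 0 0) + (L : ℂ)) * x 1)).im
        = 0 := by
      simp [Complex.mul_re, Complex.add_re, Complex.add_im, Complex.mul_im, h00im]
      ring
    constructor
    · rw [hre]
      exact quad_nonneg α u (-v) L _ _ _ _ (by positivity) (by positivity)
        (le_of_eq (by ring)) (by rw [hL2]; ring) hL
    · rw [him]

lemma dCond_term (q : Bool → ℝ) (h0 : 0 ≤ q false) (h1 : 0 ≤ q true) :
    (∑ z, q z) * distUnif (fun z => q z / ∑ z', q z') ≤ |q false - q true| / 2 := by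
  rw [distUnif]
  simp only [Fintype.sum_bool, Fintype.card_bool]
  set a := q false with ha'
  set b := q true with hb'
  rcases eq_or_lt_of_le (add_nonneg h1 h0) with h | h
  · rw [← h]
    simp
    positivity
  · have hs : (0:ℝ) < b + a := h
    have e1 : b / (b + a) - 1/(2:ℕ) = (b - a)/(2*(b+a)) := by field_simp; ring
    have e2 : a / (b + a) - 1/(2:ℕ) = (a - b)/(2*(b+a)) := by field_simp; ring
    rw [e1, e2, abs_div, abs_div, abs_of_pos (show (0:ℝ) < 2*(b+a) by linarith),
      abs_sub_comm b a]
    set m := |a - b|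
    apply le_of_eq
    field_simp
    ring

lemma dQuant_le (ρ : (Bool × Bool) → Matrix (Fin 2) (Fin 2) ℂ)
    (hρ : ∀ x, (ρ x).PosSemidef) (hρt : ∀ x, (ρ x).trace = 1)
    (g : (Bool × Bool) → Bool)
    (hg : (∑ x : Bool × Bool, (if g x then (-1:ℂ) else 1)) = 0) :
    dQuant (fun _ => (1 / 4 : ℝ)) ρ g
      ≤ lam (∑ x : Bool × Bool, (if g x then (-1:ℂ) else 1) • ρ x) / 4 := by
  set c : (Bool × Bool) → ℂ := fun x => if g x then (-1:ℂ) else 1 with hc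
  set B : Matrix (Fin 2) (Fin 2) ℂ := ∑ x : Bool × Bool, c x • ρ x with hBdef
  have hBh : B.IsHermitian := by
    show Bᴴ = B
    rw [hBdef, Matrix.conjTranspose_sum]
    refine Finset.sum_congr rfl fun x _ => ?_
    rw [Matrix.conjTranspose_smul, (hρ x).1.eq]
    congr 1
    by_cases hgx : g x <;> simp [hc, hgx]
  have hBtr : B.trace = 0 := by
    rw [hBdef, Matrix.trace_sum]
    simp only [Matrix.trace_smul, hρt, smul_eq_mul, mul_one]
    exact hg
  set L := lam B with hLdef
  have hL : 0 ≤ L := lam_nonneg B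
  have hP' := psd_shift hBh hBtr
  have hQ' := psd_shift hBh.neg (by rw [Matrix.trace_neg, hBtr, neg_zero])
  rw [lam_neg] at hQ'
  set Pm : Matrix (Fin 2) (Fin 2) ℂ := B + (L : ℂ) • 1 with hPm
  set Qm : Matrix (Fin 2) (Fin 2) ℂ := -B + (L : ℂ) • 1 with hQm
  refine Real.sSup_le ?_ (by positivity)
  rintro r ⟨M, rfl⟩
  rw [dCond]
  set P : M.ι → Bool → ℝ := fun w z =>
    ∑ x ∈ univ.filter (fun x => g x = z), (1/4 : ℝ) * ((M.E w * ρ x).trace.re) with hPdef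
  have hPnn : ∀ w z, 0 ≤ P w z := fun w z =>
    Finset.sum_nonneg fun x _ => mul_nonneg (by norm_num)
      (trace_mul_psd_re_nonneg (M.psd w) (hρ x))
  have step1 : ∀ w, (∑ z, P w z) * distUnif (fun z => P w z / ∑ z', P w z')
      ≤ |P w false - P w true| / 2 := fun w =>
    dCond_term (P w) (hPnn w false) (hPnn w true)
  have hdiff : ∀ w, P w false - P w true = (1/4) * ((M.E w * B).trace.re) := by
    intro w
    have h1 : ∀ z, P w z = ∑ x : Bool × Bool,
        if g x = z then (1/4 : ℝ) * ((M.E w * ρ x).trace.re) else 0 := fun z =>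
      Finset.sum_filter _ _
    have h2 : (M.E w * B).trace = ∑ x : Bool × Bool, c x * (M.E w * ρ x).trace := by
      rw [hBdef, Finset.mul_sum]
      rw [Matrix.trace_sum]
      refine Finset.sum_congr rfl fun x _ => ?_
      rw [Matrix.mul_smul, Matrix.trace_smul, smul_eq_mul]
    rw [h1 false, h1 true, ← Finset.sum_sub_distrib, h2, Complex.re_sum, Finset.mul_sum]
    refine Finset.sum_congr rfl fun x _ => ?_
    by_cases hgx : g x <;> simp [hc, hgx] <;> ring
  have key : ∀ w, |P w false - P w true| / 2
      ≤ (1/16) * ((M.E w * Pm).trace.re + (M.E w * Qm).trace.re) := by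
    intro w
    have hPw : 0 ≤ (M.E w * Pm).trace.re := trace_mul_psd_re_nonneg (M.psd w) hP'
    have hQw : 0 ≤ (M.E w * Qm).trace.re := trace_mul_psd_re_nonneg (M.psd w) hQ'
    have eP : (M.E w * Pm).trace = (M.E w * B).trace + (L:ℂ) * (M.E w).trace := by
      rw [hPm, Matrix.mul_add, Matrix.mul_smul, Matrix.trace_add, Matrix.trace_smul,
        Matrix.mul_one, smul_eq_mul]
    have eQ : (M.E w * Qm).trace = -(M.E w * B).trace + (L:ℂ) * (M.E w).trace := by
      rw [hQm, Matrix.mul_add, Matrix.mul_smul, Matrix.trace_add, Matrix.trace_smul,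
        Matrix.mul_one, smul_eq_mul, Matrix.mul_neg, Matrix.trace_neg]
    have eP' := congrArg Complex.re eP
    have eQ' := congrArg Complex.re eQ
    simp only [Complex.add_re, Complex.neg_re] at eP' eQ'
    rw [hdiff w]
    rw [abs_mul]
    have h8 : |(1/4 : ℝ)| = 1/4 := by norm_num
    rw [h8]
    have habs : |(M.E w * B).trace.re| ≤
        ((M.E w * Pm).trace.re + (M.E w * Qm).trace.re) / 2 := by
      rw [abs_le]
      constructor <;> nlinarith [hPw, hQw]
    nlinarith [habs]
  calc ∑ w, (∑ z, P w z) * distUnif (fun z => P w z / ∑ z', P w z')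
      ≤ ∑ w, (1/16) * ((M.E w * Pm).trace.re + (M.E w * Qm).trace.re) :=
        Finset.sum_le_sum fun w _ => le_trans (step1 w) (key w)
    _ = (1/16) * (((∑ w, M.E w) * Pm).trace.re + ((∑ w, M.E w) * Qm).trace.re) := by
        rw [Finset.sum_mul, Finset.sum_mul, Matrix.trace_sum, Matrix.trace_sum,
          Complex.re_sum, Complex.re_sum, ← Finset.mul_sum, Finset.sum_add_distrib]
    _ = L / 4 := by
        rw [M.sum_eq, Matrix.one_mul, Matrix.one_mul]
        have hPt : Pm.trace.re = 2 * L := by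
          rw [hPm, Matrix.trace_add, Matrix.trace_smul, hBtr, Matrix.trace_one]
          simp
          ring
        have hQt : Qm.trace.re = 2 * L := by
          rw [hQm, Matrix.trace_add, Matrix.trace_smul, Matrix.trace_neg, hBtr,
            Matrix.trace_one]
          simp
          ring
        rw [hPt, hQt]
        ring

end Helpers

lemma final_ineq (p1 p2 p3 p4 u1 u2 u3 u4 v1 v2 v3 v4 : ℝ)
    (hc1 : u1^2+v1^2 ≤ p1*(1-p1)) (hc2 : u2^2+v2^2 ≤ p2*(1-p2))
    (hc3 : u3^2+v3^2 ≤ p3*(1-p3)) (hc4 : u4^2+v4^2 ≤ p4*(1-p4)) :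
    Real.sqrt ((p1+p2-p3-p4)^2 + (u1+u2-u3-u4)^2 + (v1+v2-v3-v4)^2)
    + Real.sqrt ((p1-p2+p3-p4)^2 + (u1-u2+u3-u4)^2 + (v1-v2+v3-v4)^2)
    + Real.sqrt ((p1-p2-p3+p4)^2 + (u1-u2-u3+u4)^2 + (v1-v2-v3+v4)^2)
      ≤ 2 * Real.sqrt 3 := by
  set S1 := (p1+p2-p3-p4)^2 + (u1+u2-u3-u4)^2 + (v1+v2-v3-v4)^2 with hS1
  set S2 := (p1-p2+p3-p4)^2 + (u1-u2+u3-u4)^2 + (v1-v2+v3-v4)^2 with hS2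
  set S3 := (p1-p2-p3+p4)^2 + (u1-u2-u3+u4)^2 + (v1-v2-v3+v4)^2 with hS3
  have key : S1 + S2 + S3 = 4*((p1^2+u1^2+v1^2) + (p2^2+u2^2+v2^2) + (p3^2+u3^2+v3^2)
      + (p4^2+u4^2+v4^2)) - ((p1+p2+p3+p4)^2 + (u1+u2+u3+u4)^2 + (v1+v2+v3+v4)^2) := by
    rw [hS1, hS2, hS3]; ring
  have e2 : (p1+p2+p3+p4-2)^2 = (p1+p2+p3+p4)^2 - 4*(p1+p2+p3+p4) + 4 := by ring
  have hS : S1 + S2 + S3 ≤ 4 := by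
    have q1 := sq_nonneg (p1+p2+p3+p4-2)
    have q2 := sq_nonneg (u1+u2+u3+u4)
    have q3 := sq_nonneg (v1+v2+v3+v4)
    linarith
  set L1 := Real.sqrt S1
  set L2 := Real.sqrt S2
  set L3 := Real.sqrt S3
  have hL1 : L1^2 = S1 := Real.sq_sqrt (by positivity)
  have hL2 : L2^2 = S2 := Real.sq_sqrt (by positivity)
  have hL3 : L3^2 = S3 := Real.sq_sqrt (by positivity)
  have hn1 : 0 ≤ L1 := Real.sqrt_nonneg _
  have hn2 : 0 ≤ L2 := Real.sqrt_nonneg _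
  have hn3 : 0 ≤ L3 := Real.sqrt_nonneg _
  clear hc1 hc2 hc3 hc4 key e2
  clear_value S1 S2 S3
  clear hS1 hS2 hS3
  clear_value L1 L2 L3
  have h12 : (L1+L2+L3)^2 ≤ 12 := by
    nlinarith [sq_nonneg (L1-L2), sq_nonneg (L1-L3), sq_nonneg (L2-L3)]
  have hnn : 0 ≤ L1+L2+L3 := by linarith
  calc L1+L2+L3 = Real.sqrt ((L1+L2+L3)^2) := (Real.sqrt_sq hnn).symm
    _ ≤ Real.sqrt 12 := Real.sqrt_le_sqrt h12
    _ = 2 * Real.sqrt 3 := by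
        rw [show (12:ℝ) = (2*Real.sqrt 3)^2 by
          rw [mul_pow, Real.sq_sqrt] <;> norm_num]
        exact Real.sqrt_sq (by positivity)


set_option maxHeartbeats 2000000 in
/-- **Second part of Lemma `lem:compex`** (quantum upper bound): let `X` be uniform on
`{0,1}²` and `F` a uniform balanced random predicate on `{0,1}²` independent of `X`.
For every family `{ρ_x}` of density matrices on `ℂ²`,
`d(F(X)|⟨ρ_X,F⟩) ≤ 1/(2√3)`. -/
theorem lemma_compex_quantum (ρ : (Bool × Bool) → Matrix (Fin 2) (Fin 2) ℂ)
    (hρ : ∀ x, (ρ x).PosSemidef) (hρt : ∀ x, (ρ x).trace = 1) :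
    ∑ f, PF f * dQuant (fun _ => (1 / 4 : ℝ)) ρ f ≤ 1 / (2 * Real.sqrt 3) := by

  classical
  set F : ((Bool × Bool) → Bool) → ℝ := fun f => dQuant (fun _ => (1 / 4 : ℝ)) ρ f with hF
  have hc : (Bal.card : ℝ) = 6 := by norm_num [show Bal.card = 6 from by decide]
  have hsum : ∑ f, PF f * F f = (6:ℝ)⁻¹ * ∑ f ∈ Bal, F f := by
    rw [Finset.mul_sum]
    rw [show (Bal : Finset _) = univ.filter (fun f => f ∈ Bal) from by simp]
    rw [Finset.sum_filter]
    refine Finset.sum_congr rfl fun f _ => ?_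
    by_cases hf : f ∈ Bal <;> simp [PF, hf, hc]
  have henum : ∑ f ∈ Bal, F f = F (fun x => x.1) + F (fun x => x.2) + F (fun x => xor x.1 x.2)
      + F (fun x => !x.1) + F (fun x => !x.2) + F (fun x => !(xor x.1 x.2)) := by
    rw [show Bal = ({(fun x => x.1), (fun x => x.2), (fun x => xor x.1 x.2),
      (fun x => !x.1), (fun x => !x.2), (fun x => !(xor x.1 x.2))} :
      Finset ((Bool × Bool) → Bool)) from by decide]
    rw [Finset.sum_insert (by decide), Finset.sum_insert (by decide),
      Finset.sum_insert (by decide), Finset.sum_insert (by decide),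
      Finset.sum_insert (by decide), Finset.sum_singleton]
    ring
  -- the three signed matrices
  set B1 : Matrix (Fin 2) (Fin 2) ℂ :=
    ∑ x : Bool × Bool, (if x.1 then (-1:ℂ) else 1) • ρ x with hB1def
  set B2 : Matrix (Fin 2) (Fin 2) ℂ :=
    ∑ x : Bool × Bool, (if x.2 then (-1:ℂ) else 1) • ρ x with hB2def
  set B3 : Matrix (Fin 2) (Fin 2) ℂ :=
    ∑ x : Bool × Bool, (if xor x.1 x.2 then (-1:ℂ) else 1) • ρ x with hB3def
  -- sign sums are zero
  have hg1 : (∑ x : Bool × Bool, (if x.1 then (-1:ℂ) else 1)) = 0 := by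
    norm_num [Fintype.sum_prod_type, Fintype.sum_bool]
  have hg2 : (∑ x : Bool × Bool, (if x.2 then (-1:ℂ) else 1)) = 0 := by
    norm_num [Fintype.sum_prod_type, Fintype.sum_bool]
  have hg3 : (∑ x : Bool × Bool, (if xor x.1 x.2 then (-1:ℂ) else 1)) = 0 := by
    norm_num [Fintype.sum_prod_type, Fintype.sum_bool]
  have hg4 : (∑ x : Bool × Bool, (if !x.1 then (-1:ℂ) else 1)) = 0 := by
    norm_num [Fintype.sum_prod_type, Fintype.sum_bool]
  have hg5 : (∑ x : Bool × Bool, (if !x.2 then (-1:ℂ) else 1)) = 0 := by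
    norm_num [Fintype.sum_prod_type, Fintype.sum_bool]
  have hg6 : (∑ x : Bool × Bool, (if !(xor x.1 x.2) then (-1:ℂ) else 1)) = 0 := by
    norm_num [Fintype.sum_prod_type, Fintype.sum_bool]
  -- complements give negated matrices
  have hneg1 : (∑ x : Bool × Bool, (if !x.1 then (-1:ℂ) else 1) • ρ x) = -B1 := by
    rw [hB1def, ← Finset.sum_neg_distrib]
    refine Finset.sum_congr rfl fun x _ => ?_
    cases hx : x.1 <;> simp [hx]
  have hneg2 : (∑ x : Bool × Bool, (if !x.2 then (-1:ℂ) else 1) • ρ x) = -B2 := by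
    rw [hB2def, ← Finset.sum_neg_distrib]
    refine Finset.sum_congr rfl fun x _ => ?_
    cases hx : x.2 <;> simp [hx]
  have hneg3 : (∑ x : Bool × Bool, (if !(xor x.1 x.2) then (-1:ℂ) else 1) • ρ x) = -B3 := by
    rw [hB3def, ← Finset.sum_neg_distrib]
    refine Finset.sum_congr rfl fun x _ => ?_
    cases hx : xor x.1 x.2 <;> simp [hx]
  -- bounds for the six dQuant values
  have hd1 : F (fun x => x.1) ≤ lam B1 / 4 := dQuant_le ρ hρ hρt _ hg1
  have hd2 : F (fun x => x.2) ≤ lam B2 / 4 := dQuant_le ρ hρ hρt _ hg2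
  have hd3 : F (fun x => xor x.1 x.2) ≤ lam B3 / 4 := dQuant_le ρ hρ hρt _ hg3
  have hd4 : F (fun x => !x.1) ≤ lam B1 / 4 := by
    have := dQuant_le ρ hρ hρt (fun x => !x.1) hg4
    rwa [hneg1, lam_neg] at this
  have hd5 : F (fun x => !x.2) ≤ lam B2 / 4 := by
    have := dQuant_le ρ hρ hρt (fun x => !x.2) hg5
    rwa [hneg2, lam_neg] at this
  have hd6 : F (fun x => !(xor x.1 x.2)) ≤ lam B3 / 4 := by
    have := dQuant_le ρ hρ hρt (fun x => !(xor x.1 x.2)) hg6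
    rwa [hneg3, lam_neg] at this
  -- entries of the signed matrices
  have hent : ∀ (c : (Bool × Bool) → ℂ) (i j : Fin 2),
      (∑ x : Bool × Bool, c x • ρ x) i j
      = c (false,false) * ρ (false,false) i j + c (false,true) * ρ (false,true) i j
        + c (true,false) * ρ (true,false) i j + c (true,true) * ρ (true,true) i j := by
    intro c i j
    rw [Matrix.sum_apply]
    rw [Fintype.sum_prod_type]
    simp [Fintype.sum_bool, Matrix.smul_apply, smul_eq_mul]
    ring
  set p1 := (ρ (false,false) 0 0).re; set p2 := (ρ (false,true) 0 0).re
  set p3 := (ρ (true,false) 0 0).re; set p4 := (ρ (true,true) 0 0).re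
  set u1 := (ρ (false,false) 0 1).re; set u2 := (ρ (false,true) 0 1).re
  set u3 := (ρ (true,false) 0 1).re; set u4 := (ρ (true,true) 0 1).re
  set v1 := (ρ (false,false) 0 1).im; set v2 := (ρ (false,true) 0 1).im
  set v3 := (ρ (true,false) 0 1).im; set v4 := (ρ (true,true) 0 1).im
  have hlam1 : lam B1 = Real.sqrt ((p1+p2-p3-p4)^2 + (u1+u2-u3-u4)^2 + (v1+v2-v3-v4)^2) := by
    unfold lam
    rw [hB1def, hent, hent]
    simp
    simp only [p1, p2, p3, p4, u1, u2, u3, u4, v1, v2, v3, v4]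
    ring_nf
  have hlam2 : lam B2 = Real.sqrt ((p1-p2+p3-p4)^2 + (u1-u2+u3-u4)^2 + (v1-v2+v3-v4)^2) := by
    unfold lam
    rw [hB2def, hent, hent]
    simp
    simp only [p1, p2, p3, p4, u1, u2, u3, u4, v1, v2, v3, v4]
    ring_nf
  have hlam3 : lam B3 = Real.sqrt ((p1-p2-p3+p4)^2 + (u1-u2-u3+u4)^2 + (v1-v2-v3+v4)^2) := by
    unfold lam
    rw [hB3def, hent, hent]
    simp
    simp only [p1, p2, p3, p4, u1, u2, u3, u4, v1, v2, v3, v4]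
    ring_nf
  have hf1 := rho_facts (hρ (false,false)) (hρt (false,false))
  have hf2 := rho_facts (hρ (false,true)) (hρt (false,true))
  have hf3 := rho_facts (hρ (true,false)) (hρt (true,false))
  have hf4 := rho_facts (hρ (true,true)) (hρt (true,true))
  have hmain : lam B1 + lam B2 + lam B3 ≤ 2 * Real.sqrt 3 := by
    rw [hlam1, hlam2, hlam3]
    exact final_ineq p1 p2 p3 p4 u1 u2 u3 u4 v1 v2 v3 v4 hf1.2.2 hf2.2.2 hf3.2.2 hf4.2.2
  have hfin : (1/(2*Real.sqrt 3) : ℝ) = Real.sqrt 3 / 6 := by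
    have h3 : Real.sqrt 3 * Real.sqrt 3 = 3 := Real.mul_self_sqrt (by norm_num)
    have hpos : (0:ℝ) < Real.sqrt 3 := Real.sqrt_pos.2 (by norm_num)
    field_simp
    linarith
  rw [hsum, henum, hfin]
  nlinarith [hmain, hd1, hd2, hd3, hd4, hd5, hd6]
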